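/- Let Q be a directed set that is the union of countably many ω₁-directed subsets (subsets in which every countable subset has an upper bound within that subset). Then for every nonprincipal ultrafilter U on ω, ⟨U, ⊇*⟩ is not Tukey equivalent to ω × Q. -/

import Mathlib

open Cardinal

open Cardinal

/-- A subset `S` of a quasiorder `⟨α, r⟩` is bounded if it has an upper bound. -/
def TBounded {α : Type*} (r : α → α → Prop) (S : Set α) : Prop :=
  ∃ b, ∀ x ∈ S, r x b

/-- A subset `C` of `⟨α, r⟩` is cofinal if every element lies below a member of `C`. -/
def TCofinal {α : Type*} (r : α → α → Prop) (C : Set α) : Prop :=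
  ∀ x, ∃ c ∈ C, r x c

/-- A Tukey map: the image of every unbounded set is unbounded. -/
def IsTukeyMap {α β : Type*} (ra : α → α → Prop) (rb : β → β → Prop) (f : α → β) : Prop :=
  ∀ S : Set α, ¬ TBounded ra S → ¬ TBounded rb (f '' S)

/-- Tukey reducibility `P ≤_T Q`: there is a Tukey map from `P` to `Q`. -/
def TukeyLE {α β : Type*} (ra : α → α → Prop) (rb : β → β → Prop) : Prop :=
  ∃ f : α → β, IsTukeyMap ra rb f

/-- Tukey equivalence `P ≡_T Q`. -/
def TukeyEquiv {α β : Type*} (ra : α → α → Prop) (rb : β → β → Prop) : Prop :=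
  TukeyLE ra rb ∧ TukeyLE rb ra

/-- Strict Tukey reducibility `P <_T Q`. -/
def TukeyLT {α β : Type*} (ra : α → α → Prop) (rb : β → β → Prop) : Prop :=
  TukeyLE ra rb ∧ ¬ TukeyLE rb ra

/-- A directed set: a preorder in which every finite subset (in particular `∅` and pairs)
has an upper bound; equivalently, a nonempty directed preorder. -/
structure IsDirectedSet {α : Type*} (r : α → α → Prop) : Prop where
  nonempty : Nonempty α
  refl : ∀ x, r x x
  trans : ∀ {x y z}, r x y → r y z → r x z
  directed : ∀ x y, ∃ z, r x z ∧ r y z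

/-- `U` is a nonprincipal ultrafilter. -/
def Nonprincipal (U : Ultrafilter ℕ) : Prop := ∀ a : ℕ, U ≠ pure a

/-- `⟨U, ⊇⟩`: the members of `U` ordered by reverse inclusion (`A ≤ B` iff `A ⊇ B`). -/
def revIncl (U : Ultrafilter ℕ) : {A : Set ℕ // A ∈ U} → {A : Set ℕ // A ∈ U} → Prop :=
  fun A B => (B : Set ℕ) ⊆ (A : Set ℕ)

/-- `⟨U, ⊇*⟩`: the members of `U` preordered by reverse almost inclusion
(`A ≤ B` iff `A ⊇* B` iff `B \\ A` is finite). -/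
def revAlmostIncl (U : Ultrafilter ℕ) : {A : Set ℕ // A ∈ U} → {A : Set ℕ // A ∈ U} → Prop :=
  fun A B => ((B : Set ℕ) \ (A : Set ℕ)).Finite


private def Cseq (c : ℕ → Set ℕ) : ℕ → Set ℕ
  | 0 => Set.univ
  | k+1 => Cseq c k ∩ c k

private lemma Cseq_succ_subset (c : ℕ → Set ℕ) (k : ℕ) : Cseq c (k+1) ⊆ c k :=
  Set.inter_subset_right

private lemma Cseq_anti (c : ℕ → Set ℕ) : ∀ {k l : ℕ}, k ≤ l → Cseq c l ⊆ Cseq c k := by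
  intro k l h
  induction l with
  | zero =>
    have : k = 0 := Nat.le_zero.mp h
    subst this; exact subset_rfl
  | succ l ih =>
    rcases Nat.lt_or_ge k (l+1) with h1 | h1
    · exact (Set.inter_subset_left).trans (ih (Nat.lt_succ_iff.mp h1))
    · have : k = l + 1 := le_antisymm h h1
      subst this; exact subset_rfl

private def Eseq (c : ℕ → Set ℕ) : ℕ → Set ℕ
  | 0 => (Cseq c 0 \ Cseq c 1) ∪ ⋂ k, Cseq c k
  | s+1 => Cseq c (s+1) \ Cseq c (s+2)

private lemma Eseq_subset_C (c : ℕ → Set ℕ) (s : ℕ) : Eseq c s ⊆ Cseq c s := by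
  cases s with
  | zero =>
    rintro x (⟨hx, _⟩ | hx)
    · exact hx
    · exact Set.mem_iInter.mp hx 0
  | succ s => exact Set.diff_subset

private lemma Eseq_disj (c : ℕ → Set ℕ) {s t : ℕ} (hst : s < t) {x : ℕ}
    (hs : x ∈ Eseq c s) (ht : x ∈ Eseq c t) : False := by
  obtain ⟨t', rfl⟩ : ∃ t', t = t' + 1 := ⟨t - 1, by omega⟩
  have hxt : x ∈ Cseq c (t'+1) \ Cseq c (t'+2) := ht
  cases s with
  | zero =>
    rcases hs with ⟨_, hx1⟩ | hx
    · exact hx1 (Cseq_anti c (by omega) hxt.1)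
    · exact hxt.2 (Set.mem_iInter.mp hx (t'+2))
  | succ s =>
    have hxs : x ∈ Cseq c (s+1) \ Cseq c (s+2) := hs
    exact hxs.2 (Cseq_anti c (by omega) hxt.1)

private lemma Eseq_eq_of_mem (c : ℕ → Set ℕ) {s t : ℕ} {x : ℕ}
    (hs : x ∈ Eseq c s) (ht : x ∈ Eseq c t) : s = t := by
  rcases lt_trichotomy s t with h | h | h
  · exact absurd (Eseq_disj c h hs ht) id
  · exact h
  · exact absurd (Eseq_disj c h ht hs) id

private lemma Eseq_cover (c : ℕ → Set ℕ) (x : ℕ) : ∃ s, x ∈ Eseq c s := by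
  classical
  by_cases h : ∀ k, x ∈ Cseq c k
  · exact ⟨0, Or.inr (Set.mem_iInter.mpr h)⟩
  · push_neg at h
    have hex : ∃ k, x ∉ Cseq c k := h
    set k0 := Nat.find hex with hk0
    have hspec : x ∉ Cseq c k0 := Nat.find_spec hex
    have hmin : ∀ l, l < k0 → x ∈ Cseq c l := by
      intro l hl
      by_contra hc
      exact Nat.find_min hex hl hc
    have hk0pos : k0 ≠ 0 := by
      intro h0
      rw [h0] at hspec
      exact hspec (Set.mem_univ x)
    obtain ⟨t, ht⟩ : ∃ t, k0 = t + 1 := ⟨k0 - 1, by omega⟩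
    have hxt : x ∈ Cseq c t := hmin t (by omega)
    have hxt2 : x ∉ Cseq c (t+1) := ht ▸ hspec
    cases t with
    | zero => exact ⟨0, Or.inl ⟨hxt, hxt2⟩⟩
    | succ t' => exact ⟨t'+1, ⟨hxt, hxt2⟩⟩

private def Wseq (c : ℕ → Set ℕ) (m k : ℕ) : Set ℕ := ⋃ s ∈ Finset.Ico m k, Eseq c s

private lemma mem_Wseq (c : ℕ → Set ℕ) {m k x : ℕ} :
    x ∈ Wseq c m k ↔ ∃ s, m ≤ s ∧ s < k ∧ x ∈ Eseq c s := by
  simp [Wseq, Finset.mem_Ico]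
  tauto

private lemma Wseq_zero (c : ℕ → Set ℕ) : Wseq c 0 0 = ∅ := by
  simp [Wseq]

private lemma Wseq_succ (c : ℕ → Set ℕ) (m : ℕ) :
    Wseq c 0 (m+1) = Wseq c 0 m ∪ Eseq c m := by
  ext x
  simp only [mem_Wseq, Set.mem_union]
  constructor
  · rintro ⟨s, _, hs2, hx⟩
    rcases Nat.lt_or_ge s m with h | h
    · exact Or.inl ⟨s, Nat.zero_le _, h, hx⟩
    · have : s = m := by omega
      subst this; exact Or.inr hx
  · rintro (⟨s, hs1, hs2, hx⟩ | hx)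
    · exact ⟨s, hs1, by omega, hx⟩
    · exact ⟨m, Nat.zero_le _, by omega, hx⟩

private def yseq (β : ℕ → ℕ → ℕ) : ℕ → ℕ
  | 0 => 0
  | i+1 => max (yseq β i + 1) ((Finset.range (i+1)).sup fun j => β j (yseq β i))

private lemma yseq_lt (β : ℕ → ℕ → ℕ) (i : ℕ) : yseq β i < yseq β (i+1) :=
  lt_of_lt_of_le (Nat.lt_succ_self _) (le_max_left _ _)

private lemma yseq_mono (β : ℕ → ℕ → ℕ) {i j : ℕ} (h : i ≤ j) : yseq β i ≤ yseq β j := by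
  induction j with
  | zero => have : i = 0 := Nat.le_zero.mp h; subst this; exact le_rfl
  | succ j ih =>
    rcases Nat.lt_or_ge i (j+1) with h1 | h1
    · exact le_trans (ih (Nat.lt_succ_iff.mp h1)) (le_of_lt (yseq_lt β j))
    · have : i = j + 1 := le_antisymm h h1
      subst this; exact le_rfl

private lemma yseq_beta_le (β : ℕ → ℕ → ℕ) {j i : ℕ} (h : j ≤ i) :
    β j (yseq β i) ≤ yseq β (i+1) := by
  have h1 : β j (yseq β i) ≤ (Finset.range (i+1)).sup (fun j => β j (yseq β i)) :=
    Finset.le_sup (f := fun j => β j (yseq β i)) (Finset.mem_range.mpr (Nat.lt_succ_of_le h))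
  exact le_trans h1 (le_max_right _ _)

private lemma yseq_block (β : ℕ → ℕ → ℕ) (s : ℕ) :
    ∃ i, yseq β i ≤ s ∧ s < yseq β (i+1) := by
  induction s with
  | zero => exact ⟨0, le_rfl, yseq_lt β 0⟩
  | succ s ih =>
    obtain ⟨i, h1, h2⟩ := ih
    rcases Nat.lt_or_ge (s+1) (yseq β (i+1)) with h | h
    · exact ⟨i, by omega, h⟩
    · have heq : yseq β (i+1) = s + 1 := by omega
      exact ⟨i+1, by omega, heq ▸ yseq_lt β (i+1)⟩

private lemma yseq_block_disj (β : ℕ → ℕ → ℕ) {p q s : ℕ} (hpq : p ≠ q)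
    (h1 : yseq β p ≤ s) (h2 : s < yseq β (p+1))
    (h3 : yseq β q ≤ s) (h4 : s < yseq β (q+1)) : False := by
  rcases Nat.lt_or_ge p q with h | h
  · have := yseq_mono β (show p + 1 ≤ q by omega)
    omega
  · have hq : q < p := by omega
    have := yseq_mono β (show q + 1 ≤ p by omega)
    omega

private lemma case2 {Q : Type*} (r : Q → Q → Prop)
    (Qn : ℕ → Set Q) (hcov : (⋃ n, Qn n) = Set.univ)
    (hdir : ∀ n, ∀ S ⊆ Qn n, S.Countable → ∃ b ∈ Qn n, ∀ x ∈ S, r x b)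
    (U : Ultrafilter ℕ)
    (f : {A : Set ℕ // A ∈ U} → ℕ × Q)
    (hf : IsTukeyMap (revAlmostIncl U) (fun a b : ℕ × Q => a.1 ≤ b.1 ∧ r a.2 b.2) f)
    (c : ℕ → {A : Set ℕ // A ∈ U})
    (hcnb : ¬ TBounded (revAlmostIncl U) (Set.range c)) : False := by
  classical
  set cs : ℕ → Set ℕ := fun i => ((c i : Set ℕ)) with hcsdef
  -- all C-sets are in U
  have hCU : ∀ k, Cseq cs k ∈ U := by
    intro k
    induction k with
    | zero => exact Filter.univ_mem
    | succ k ih => exact Filter.inter_mem ih (c k).2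
  -- the decreasing chain is unbounded
  have hccnb : ¬ TBounded (revAlmostIncl U)
      (Set.range (fun k => (⟨Cseq cs k, hCU k⟩ : {A : Set ℕ // A ∈ U}))) := by
    rintro ⟨b, hb⟩
    apply hcnb
    refine ⟨b, ?_⟩
    rintro x ⟨i, rfl⟩
    have h1 := hb _ ⟨i+1, rfl⟩
    exact h1.subset (Set.diff_subset_diff_right (Cseq_succ_subset cs i))
  -- no cell is in U
  have hEnot : ∀ s, Eseq cs s ∉ U := by
    intro s hmem
    cases s with
    | zero =>
      rcases Ultrafilter.union_mem_iff.mp hmem with h | h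
      · obtain ⟨x, hx⟩ := Filter.nonempty_of_mem (Filter.inter_mem h (hCU 1))
        exact hx.1.2 hx.2
      · apply hccnb
        refine ⟨⟨⋂ k, Cseq cs k, h⟩, ?_⟩
        rintro x ⟨k, rfl⟩
        show ((⋂ k, Cseq cs k) \ Cseq cs k).Finite
        rw [Set.diff_eq_empty.mpr (Set.iInter_subset _ k)]
        exact Set.finite_empty
    | succ s =>
      obtain ⟨x, hx⟩ := Filter.nonempty_of_mem (Filter.inter_mem hmem (hCU (s+2)))
      exact hx.1.2 hx.2
  -- no cumulative union of cells is in U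
  have hW0 : ∀ m, Wseq cs 0 m ∉ U := by
    intro m
    induction m with
    | zero => rw [Wseq_zero]; exact Filter.empty_notMem _
    | succ m ih =>
      rw [Wseq_succ]
      intro hmem
      rcases Ultrafilter.union_mem_iff.mp hmem with h | h
      · exact ih h
      · exact hEnot m h
  -- key witness property: no U-set has all cell-traces finite
  have hKW : ∀ d : Set ℕ, d ∈ U → (∀ s, (d ∩ Eseq cs s).Finite) → False := by
    intro d hd htr
    apply hccnb
    refine ⟨⟨d, hd⟩, ?_⟩
    rintro x ⟨k, rfl⟩
    show (d \ Cseq cs k).Finite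
    have hsub : d \ Cseq cs k ⊆ ⋃ s ∈ Finset.range k, (d ∩ Eseq cs s) := by
      rintro x ⟨hxd, hxC⟩
      obtain ⟨s, hxs⟩ := Eseq_cover cs x
      have hsk : s < k := by
        by_contra hge
        push_neg at hge
        exact hxC (Cseq_anti cs hge (Eseq_subset_C cs s hxs))
      exact Set.mem_biUnion (Finset.mem_range.mpr hsk) ⟨hxd, hxs⟩
    exact (Set.Finite.biUnion (Finset.range k).finite_toSet (fun s _ => htr s)).subset hsub
  -- choice of a covering index for each q
  have hMex : ∀ q : Q, ∃ n, q ∈ Qn n := by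
    intro q
    exact Set.mem_iUnion.mp (Set.eq_univ_iff_forall.mp hcov q)
  choose M hM using hMex
  -- per-piece rank bounds
  have hbeta : ∀ j m : ℕ, ∃ R : ℕ, ∀ X : {A : Set ℕ // A ∈ U},
      (f X).1 = (Nat.unpair j).1 → M (f X).2 = (Nat.unpair j).2 →
      ¬ (((X : Set ℕ) ∩ Wseq cs m R).Finite) := by
    intro j m
    by_contra hcon
    push_neg at hcon
    choose XX h1 h2 h3 using hcon
    have hsub : Set.range (fun R => (f (XX R)).2) ⊆ Qn (Nat.unpair j).2 := by
      rintro q ⟨R, rfl⟩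
      have := hM (f (XX R)).2
      rwa [h2 R] at this
    obtain ⟨b, hbQ, hb⟩ := hdir (Nat.unpair j).2 _ hsub (Set.countable_range _)
    have hBimg : TBounded (fun a b : ℕ × Q => a.1 ≤ b.1 ∧ r a.2 b.2)
        (f '' Set.range XX) := by
      refine ⟨((Nat.unpair j).1, b), ?_⟩
      rintro x ⟨X, ⟨R, rfl⟩, rfl⟩
      exact ⟨le_of_eq (h1 R), hb _ ⟨R, rfl⟩⟩
    have hBdom : TBounded (revAlmostIncl U) (Set.range XX) := by
      by_contra hUb
      exact hf _ hUb hBimg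
    obtain ⟨cb, hcb⟩ := hBdom
    have htrace : ∀ R, (((cb : Set ℕ)) ∩ Wseq cs m R).Finite := by
      intro R
      have h4 := hcb (XX R) ⟨R, rfl⟩
      refine ((h4.union (h3 R)).subset ?_)
      rintro x ⟨hx1, hx2⟩
      by_cases hxX : x ∈ ((XX R : Set ℕ))
      · exact Or.inr ⟨hxX, hx2⟩
      · exact Or.inl ⟨hx1, hxX⟩
    have hdU : ((cb : Set ℕ) ∩ (Wseq cs 0 m)ᶜ : Set ℕ) ∈ U :=
      Filter.inter_mem cb.2 (Ultrafilter.compl_mem_iff_notMem.mpr (hW0 m))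
    apply hKW _ hdU
    intro s
    by_cases hs : s < m
    · refine Set.finite_empty.subset ?_
      rintro x ⟨⟨_, hxW⟩, hxE⟩
      exact absurd (Set.mem_biUnion (Finset.mem_Ico.mpr ⟨Nat.zero_le _, hs⟩) hxE) hxW
    · push_neg at hs
      refine (htrace (s+1)).subset ?_
      rintro x ⟨⟨hxc, _⟩, hxE⟩
      exact ⟨hxc, Set.mem_biUnion (Finset.mem_Ico.mpr ⟨hs, Nat.lt_succ_self s⟩) hxE⟩
  choose β hβ using hbeta
  -- the parity diagonal
  set y := yseq β with hydef
  -- generic final contradiction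
  have finale : ∀ (X : Set ℕ) (hXU : X ∈ U) (a : ℕ → ℕ) (I : ℕ → ℕ),
      (∀ j, j ≤ I j) → (∀ j t, a t ≠ I j) →
      X = (⋃ t, Wseq cs (y (a t)) (y (a t + 1))) → False := by
    intro X hXU a I hIle hIne hXeq
    set Xs : {A : Set ℕ // A ∈ U} := ⟨X, hXU⟩ with hXs
    set j0 := Nat.pair (f Xs).1 (M (f Xs).2) with hj0
    have hP1 : (f Xs).1 = (Nat.unpair j0).1 := by rw [hj0, Nat.unpair_pair]
    have hP2 : M (f Xs).2 = (Nat.unpair j0).2 := by rw [hj0, Nat.unpair_pair]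
    set i := I j0 with hidef
    have hfin := hβ j0 (y i) Xs hP1 hP2
    apply hfin
    have hempty : ((Xs : Set ℕ) ∩ Wseq cs (y i) (β j0 (y i))) ⊆ (∅ : Set ℕ) := by
      rintro x ⟨hx1, hx2⟩
      have hx1' : x ∈ ⋃ t, Wseq cs (y (a t)) (y (a t + 1)) := by
        rw [← hXeq]; exact hx1
      obtain ⟨t, hxt⟩ := Set.mem_iUnion.mp hx1'
      obtain ⟨s₁, hs₁a, hs₁b, hxE1⟩ := (mem_Wseq cs).mp hxt
      obtain ⟨s₂, hs₂a, hs₂b, hxE2⟩ := (mem_Wseq cs).mp hx2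
      have hs2' : s₂ < y (i+1) := lt_of_lt_of_le hs₂b (yseq_beta_le β (hIle j0))
      have hseq : s₁ = s₂ := Eseq_eq_of_mem cs hxE1 hxE2
      subst hseq
      exact yseq_block_disj β (hIne j0 t) hs₁a hs₁b hs₂a hs2'
    exact Set.finite_empty.subset hempty
  -- the two parity classes
  have hcoverall : ∀ x : ℕ, x ∈ (⋃ t, Wseq cs (y (2*t)) (y (2*t + 1))) ∪
      (⋃ t, Wseq cs (y (2*t+1)) (y (2*t+1 + 1))) := by
    intro x
    obtain ⟨s, hxs⟩ := Eseq_cover cs x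
    obtain ⟨i, hi1, hi2⟩ := yseq_block β s
    rcases Nat.even_or_odd i with ⟨t, ht⟩ | ⟨t, ht⟩
    · left
      refine Set.mem_iUnion.mpr ⟨t, (mem_Wseq cs).mpr ⟨s, ?_, ?_, hxs⟩⟩
      · rw [show 2*t = i by omega]; exact hi1
      · rw [show 2*t+1 = i+1 by omega]; exact hi2
    · right
      refine Set.mem_iUnion.mpr ⟨t, (mem_Wseq cs).mpr ⟨s, ?_, ?_, hxs⟩⟩
      · rw [show 2*t+1 = i by omega]; exact hi1
      · rw [show 2*t+1+1 = i+1 by omega]; exact hi2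
  have hunion : (⋃ t, Wseq cs (y (2*t)) (y (2*t + 1))) ∪
      (⋃ t, Wseq cs (y (2*t+1)) (y (2*t+1 + 1))) ∈ U :=
    Filter.mem_of_superset Filter.univ_mem (fun x _ => hcoverall x)
  rcases Ultrafilter.union_mem_iff.mp hunion with h | h
  · exact finale _ h (fun t => 2*t) (fun j => 2*j+1) (fun j => by omega)
      (fun j t => by omega) rfl
  · exact finale _ h (fun t => 2*t+1) (fun j => 2*j) (fun j => by omega)
      (fun j t => by omega) rfl

/-- If a directed set `Q` is a countable union of `ω₁`-directed subsets, then no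
`⟨U, ⊇*⟩` for a nonprincipal ultrafilter `U` on `ω` is Tukey equivalent to `ω × Q`. -/
theorem stmt15 {Q : Type*} (r : Q → Q → Prop) (hQ : IsDirectedSet r)
    (Qn : ℕ → Set Q) (hcov : (⋃ n, Qn n) = Set.univ)
    (hdir : ∀ n, ∀ S ⊆ Qn n, S.Countable → ∃ b ∈ Qn n, ∀ x ∈ S, r x b) :
    ∀ U : Ultrafilter ℕ, Nonprincipal U →
      ¬ TukeyEquiv (revAlmostIncl U) (fun a b : ℕ × Q => a.1 ≤ b.1 ∧ r a.2 b.2) := by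
  intro U hU
  rintro ⟨⟨f, hf⟩, ⟨g, hg⟩⟩
  by_cases hPP : ∀ S : Set {A : Set ℕ // A ∈ U}, S.Countable →
      TBounded (revAlmostIncl U) S
  · -- every countable subset of U is bounded: contradict via g
    obtain ⟨q₀⟩ := hQ.nonempty
    have hS₀ : ¬ TBounded (fun a b : ℕ × Q => a.1 ≤ b.1 ∧ r a.2 b.2)
        (Set.range fun i : ℕ => ((i, q₀) : ℕ × Q)) := by
      rintro ⟨b, hb⟩
      have h1 := hb (b.1 + 1, q₀) ⟨b.1 + 1, rfl⟩
      have h2 : b.1 + 1 ≤ b.1 := h1.1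
      omega
    exact hg _ hS₀ (hPP _ ((Set.countable_range _).image g))
  · -- some countable subset is unbounded: contradict via f
    push_neg at hPP
    obtain ⟨S, hSc, hSnb⟩ := hPP
    rcases S.eq_empty_or_nonempty with rfl | hne
    · exact hSnb ⟨⟨Set.univ, Filter.univ_mem⟩,
        fun x hx => absurd hx (Set.notMem_empty x)⟩
    obtain ⟨c, rfl⟩ := hSc.exists_eq_range hne
    exact (case2 r Qn hcov hdir U f hf c hSnb).elim
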